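/- Let ρ_EPR = ΦΦ* with Φ = (|00⟩ + |11⟩)/√2, and for 0 < η ≤ 1 let σ_η = (1 − η) · (I_4 / 4) + η · ρ_EPR be the corresponding pseudo-pure state. Then σ_η is a density matrix on ℂ² ⊗ ℂ² that is not classical-quantum. (The pseudo-entangled states produced by the NMR device cannot be expressed without superposition, i.e. they have nonzero quantum discord.) -/

import Mathlib

open Matrix Kronecker BigOperators ComplexOrder

noncomputable section

/-- Partial trace over the second factor. -/
def trB {m n : ℕ} (ρ : Matrix (Fin m × Fin n) (Fin m × Fin n) ℂ) :
    Matrix (Fin m) (Fin m) ℂ :=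
  fun i j => ∑ k : Fin n, ρ (i, k) (j, k)

/-- Partial trace over the first factor. -/
def trA {m n : ℕ} (ρ : Matrix (Fin m × Fin n) (Fin m × Fin n) ℂ) :
    Matrix (Fin n) (Fin n) ℂ :=
  fun k l => ∑ i : Fin m, ρ (i, k) (i, l)

/-- A density matrix: positive semidefinite with trace 1. -/
def IsDensityMatrix {d : Type*} [Fintype d] [DecidableEq d] (ρ : Matrix d d ℂ) : Prop :=
  ρ.PosSemidef ∧ ρ.trace = 1

/-- An orthonormal basis of ℂ^m, given as a family of m vectors. -/
def IsONB {m : ℕ} (e : Fin m → Fin m → ℂ) : Prop :=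
  ∀ i j, star (e i) ⬝ᵥ e j = if i = j then 1 else 0

/-- The rank-one matrix v v*, with entries v j * conj (v k). -/
def proj {m : ℕ} (v : Fin m → ℂ) : Matrix (Fin m) (Fin m) ℂ :=
  vecMulVec v (star v)

/-- A classical-quantum (zero-discord) state: ρ = ∑ i (eᵢ eᵢ*) ⊗ σᵢ for an
orthonormal basis e of ℂ^m and positive semidefinite σᵢ. -/
def ClassicalQuantum {m n : ℕ} (ρ : Matrix (Fin m × Fin n) (Fin m × Fin n) ℂ) : Prop :=
  ∃ e : Fin m → Fin m → ℂ, IsONB e ∧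
    ∃ σ : Fin m → Matrix (Fin n) (Fin n) ℂ,
      (∀ i, (σ i).PosSemidef) ∧ ρ = ∑ i, proj (e i) ⊗ₖ σ i

/-- A pure state: ρ = ψψ* for a unit vector ψ. -/
def IsPure {d : ℕ} (ρ : Matrix (Fin d) (Fin d) ℂ) : Prop :=
  ∃ ψ : Fin d → ℂ, star ψ ⬝ᵥ ψ = 1 ∧ ρ = vecMulVec ψ (star ψ)

/-- The standard basis vector |ab⟩ of ℂ² ⊗ ℂ². -/
def ket2 (a b : Fin 2) : Fin 2 × Fin 2 → ℂ :=
  fun p => if p = (a, b) then 1 else 0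

/-- The EPR state vector Φ = (|00⟩ + |11⟩)/√2. -/
def Phi : Fin 2 × Fin 2 → ℂ :=
  ((Real.sqrt 2 : ℂ))⁻¹ • (ket2 0 0 + ket2 1 1)

lemma aux_psd_vecMulVec {d : Type*} [Fintype d] [DecidableEq d] (v : d → ℂ) :
    (vecMulVec v (star v)).PosSemidef := by
  rw [vecMulVec_eq (ι := Unit)]
  have h : replicateRow Unit (star v) = (replicateCol Unit v)ᴴ := by ext i j; simp
  rw [h]
  exact posSemidef_self_mul_conjTranspose _

lemma aux_psd_smul {d : Type*} [Fintype d] [DecidableEq d] (c : ℝ) (hc : 0 ≤ c)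
    {M : Matrix d d ℂ} (hM : M.PosSemidef) : ((c : ℂ) • M).PosSemidef := by
  constructor
  · unfold Matrix.IsHermitian
    rw [conjTranspose_smul, hM.1]
    simp [Complex.conj_ofReal]
  · intro x
    have h := hM.2 x
    have e : (x.sum fun i xi => x.sum fun j xj => star xi * ((c : ℂ) • M) i j * xj) =
        (c : ℂ) * x.sum fun i xi => x.sum fun j xj => star xi * M i j * xj := by
      simp only [Finsupp.sum, Finset.mul_sum, Matrix.smul_apply, smul_eq_mul]
      refine Finset.sum_congr rfl fun i _ => Finset.sum_congr rfl fun j _ => ?_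
      ring
    rw [e]
    exact mul_nonneg (by exact_mod_cast hc) h

lemma aux_sqrt2_sq : ((Real.sqrt 2 : ℂ))⁻¹ * ((Real.sqrt 2 : ℂ))⁻¹ = 1/2 := by
  rw [← mul_inv]
  norm_cast
  rw [Real.mul_self_sqrt (by norm_num)]
  norm_num

lemma aux_Phi_apply (p : Fin 2 × Fin 2) :
    Phi p = if p = (0,0) ∨ p = (1,1) then ((Real.sqrt 2 : ℂ))⁻¹ else 0 := by
  fin_cases p <;> simp [Phi, ket2]

theorem stmt10 (η : ℝ) (hη0 : 0 < η) (hη1 : η ≤ 1) :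
    IsDensityMatrix
      (((1 - η : ℝ) : ℂ) • ((1 / 4 : ℂ) • (1 : Matrix (Fin 2 × Fin 2) (Fin 2 × Fin 2) ℂ)) +
        ((η : ℝ) : ℂ) • vecMulVec Phi (star Phi)) ∧
    ¬ ClassicalQuantum
      (((1 - η : ℝ) : ℂ) • ((1 / 4 : ℂ) • (1 : Matrix (Fin 2 × Fin 2) (Fin 2 × Fin 2) ℂ)) +
        ((η : ℝ) : ℂ) • vecMulVec Phi (star Phi)) := by
  constructor
  · constructor
    · apply Matrix.PosSemidef.add
      · have h14 : ((1 / 4 : ℝ) : ℂ) = (1 / 4 : ℂ) := by norm_num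
        have h1 : ((1 / 4 : ℂ) • (1 : Matrix (Fin 2 × Fin 2) (Fin 2 × Fin 2) ℂ)).PosSemidef := by
          rw [← h14]
          exact aux_psd_smul (1/4) (by norm_num) Matrix.PosSemidef.one
        exact aux_psd_smul (1 - η) (by linarith) h1
      · exact aux_psd_smul η hη0.le (aux_psd_vecMulVec Phi)
    · rw [trace_add, trace_smul, trace_smul, trace_smul, trace_one]
      have h : (vecMulVec Phi (star Phi)).trace = 1 := by
        rw [trace]
        simp only [diag_apply, vecMulVec_apply, Pi.star_apply]
        rw [Fintype.sum_prod_type]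
        simp [Fin.sum_univ_two, aux_Phi_apply, Complex.conj_ofReal, aux_sqrt2_sq]
        norm_num [aux_sqrt2_sq]
      rw [h]
      push_cast
      simp
  · rintro ⟨e, hONB, σ, hPSD, hEq⟩
    have key : ∀ p q : Fin 2 × Fin 2,
        (((1 - η : ℝ) : ℂ) • ((1 / 4 : ℂ) • (1 : Matrix (Fin 2 × Fin 2) (Fin 2 × Fin 2) ℂ)) +
          ((η : ℝ) : ℂ) • vecMulVec Phi (star Phi)) p q
        = ∑ i : Fin 2, e i p.1 * star (e i q.1) * σ i p.2 q.2 := by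
      intro p q
      rw [Matrix.ext_iff.2 hEq p q]
      simp [Finset.sum_apply, proj, kroneckerMap_apply, vecMulVec_apply, mul_assoc]
    have E1 := key (0,0) (0,1)
    have E2 := key (1,0) (1,1)
    have E3 := key (0,0) (1,1)
    have E4 := key (1,0) (0,1)
    simp only [Matrix.add_apply, Matrix.smul_apply, Matrix.one_apply, vecMulVec_apply,
      Pi.star_apply, Fin.sum_univ_two] at E1 E2 E3 E4
    norm_num [Phi, ket2, Complex.conj_ofReal, aux_sqrt2_sq, Prod.ext_iff] at E1 E2 E3 E4
    have N0 := hONB 0 0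
    have N1 := hONB 1 1
    simp only [dotProduct, Fin.sum_univ_two, Pi.star_apply, Complex.star_def, if_true,
      if_pos rfl] at N0 N1
    set s := σ 0 0 1 with hs
    set t := σ 1 0 1 with htdef
    have h_sum : s + t = 0 := by linear_combination -E1 - E2 - s * N0 - t * N1
    have ht : t = -s := by linear_combination h_sum
    rw [ht] at E3 E4
    have E4c := congrArg (starRingEnd ℂ) E4
    simp only [map_add, _root_.map_mul, map_neg, map_zero, Complex.conj_conj] at E4c
    have h5 : (η : ℂ) / 2 * (starRingEnd ℂ) s = 0 := by
      linear_combination (starRingEnd ℂ) s * E3 - s * E4c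
    have hη : (η : ℂ) ≠ 0 := by exact_mod_cast hη0.ne'
    have hcs : (starRingEnd ℂ) s = 0 := by
      rcases mul_eq_zero.1 h5 with h | h
      · exact absurd h (by simpa using hη)
      · exact h
    have hs0 : s = 0 := by
      have := congrArg (starRingEnd ℂ) hcs
      simpa using this
    rw [hs0] at E3
    norm_num at E3
    exact hη0.ne' E3
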